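/- Let $\mathfrak{b}=\mathfrak{b}_1\mathfrak{b}_2$ be a factorisation of a non-zero integral ideal of $\mathfrak{o}$ into integral ideals with $\gcd(\mathrm{N}\mathfrak{b}_1,\mathrm{N}\mathfrak{b}_2)=1$. Then for any $N\in\mathfrak{o}$ and any $\mathbf{m}\in\widehat{{}^{G}\mathfrak{b}}^n$, the exponential sum satisfies the twisted multiplicativity relation $S_\mathfrak{b}(N;\mathbf{m})=S_{\mathfrak{b}_1}(\overline{\mathrm{N}\mathfrak{b}_2}^{\,2}N;(\mathrm{N}\mathfrak{b}_2)\mathbf{m})\,S_{\mathfrak{b}_2}(\overline{\mathrm{N}\mathfrak{b}_1}^{\,2}N;(\mathrm{N}\mathfrak{b}_1)\mathbf{m})$, where $\overline{\mathrm{N}\mathfrak{b}_2}$ denotes a multiplicative inverse of $\mathrm{N}\mathfrak{b}_2$ modulo $\mathfrak{b}_1$ and vice versa. -/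

import Mathlib

open NumberField
open scoped BigOperators

/-- The action of `Gal(K/ℚ)` on the ring of integers of `K`. -/
noncomputable def gact (K : Type*) [Field K] [NumberField K]
    (τ : K ≃ₐ[ℚ] K) : (𝓞 K) ≃ₐ[ℤ] (𝓞 K) :=
  galRestrict ℤ ℚ K (𝓞 K) τ

/-- The generalised quadratic form attached to a symmetric coefficient tuple
`c : Fin n → Fin n → Gal(K/ℚ) → Gal(K/ℚ) → 𝓞 K`. -/
noncomputable def gqf {K : Type*} [Field K] [NumberField K] {n : ℕ}
    (c : Fin n → Fin n → (K ≃ₐ[ℚ] K) → (K ≃ₐ[ℚ] K) → 𝓞 K)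
    (x : Fin n → 𝓞 K) : 𝓞 K :=
  ∑ i, ∑ j, ∑ τ : K ≃ₐ[ℚ] K, ∑ τ' : K ≃ₐ[ℚ] K,
    c i j τ τ' * gact K τ (x i) * gact K τ' (x j)

/-- The generalised bilinear form attached to `c`. -/
noncomputable def gbf {K : Type*} [Field K] [NumberField K] {n : ℕ}
    (c : Fin n → Fin n → (K ≃ₐ[ℚ] K) → (K ≃ₐ[ℚ] K) → 𝓞 K)
    (x y : Fin n → 𝓞 K) : 𝓞 K :=
  ∑ i, ∑ j, ∑ τ : K ≃ₐ[ℚ] K, ∑ τ' : K ≃ₐ[ℚ] K,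
    c i j τ τ' * gact K τ (x i) * gact K τ' (y j)

/-- The `G`-invariant ideal `ᴳ𝔟 = ⋂_{τ ∈ G} 𝔟^{τ⁻¹}`. -/
noncomputable def GIdeal {K : Type*} [Field K] [NumberField K]
    (G : Set (K ≃ₐ[ℚ] K)) (𝔟 : Ideal (𝓞 K)) : Ideal (𝓞 K) :=
  ⨅ τ ∈ G, Ideal.map (gact K τ.symm) 𝔟

lemma gbf_add_right {K : Type*} [Field K] [NumberField K] {n : ℕ}
    (c : Fin n → Fin n → (K ≃ₐ[ℚ] K) → (K ≃ₐ[ℚ] K) → 𝓞 K)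
    (a x y : Fin n → 𝓞 K) : gbf c a (x + y) = gbf c a x + gbf c a y := by
  simp [gbf, Pi.add_apply, map_add, mul_add, Finset.sum_add_distrib]

lemma gbf_neg_right {K : Type*} [Field K] [NumberField K] {n : ℕ}
    (c : Fin n → Fin n → (K ≃ₐ[ℚ] K) → (K ≃ₐ[ℚ] K) → 𝓞 K)
    (a x : Fin n → 𝓞 K) : gbf c a (-x) = - gbf c a x := by
  simp [gbf, Pi.neg_apply, map_neg, mul_neg, Finset.sum_neg_distrib]

/-- The subgroup `ℋ_𝔟 = {h ∈ 𝓞ⁿ : 2 B(a; h) ∈ 𝔟 ∀ a}`. -/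
noncomputable def Hsub {K : Type*} [Field K] [NumberField K] {n : ℕ}
    (c : Fin n → Fin n → (K ≃ₐ[ℚ] K) → (K ≃ₐ[ℚ] K) → 𝓞 K)
    (𝔟 : Ideal (𝓞 K)) : AddSubgroup (Fin n → 𝓞 K) where
  carrier := {h | ∀ a, 2 * gbf c a h ∈ 𝔟}
  zero_mem' := by
    intro a
    have : gbf c a (0 : Fin n → 𝓞 K) = 0 := by
      simp [gbf]
    simp [this]
  add_mem' := by
    intro x y hx hy a
    rw [gbf_add_right, mul_add]
    exact Ideal.add_mem _ (hx a) (hy a)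
  neg_mem' := by
    intro x hx a
    rw [gbf_neg_right, mul_neg]
    exact (Ideal.neg_mem_iff _).mpr (hx a)

/-- The subgroup `(ᴳ𝔟)ⁿ ⊆ 𝓞ⁿ`. -/
noncomputable def GIdealPow {K : Type*} [Field K] [NumberField K] (n : ℕ)
    (G : Set (K ≃ₐ[ℚ] K)) (𝔟 : Ideal (𝓞 K)) : AddSubgroup (Fin n → 𝓞 K) :=
  AddSubgroup.pi Set.univ fun _ => (GIdeal G 𝔟).toAddSubgroup

/-- `ψ(x) = exp(2πi Tr_{K/ℚ}(x))`. -/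
noncomputable def psiK (K : Type*) [Field K] [NumberField K] (x : K) : ℂ :=
  Complex.exp (2 * Real.pi * Complex.I * ((Algebra.trace ℚ K x : ℚ) : ℂ))

/-- `σ : 𝓞 K → ℂ` is invariant under translation by the ideal `𝔟`. -/
def IsCharModI {K : Type*} [Field K] [NumberField K] (𝔟 : Ideal (𝓞 K))
    (σ : 𝓞 K → ℂ) : Prop :=
  ∀ x z : 𝓞 K, z ∈ 𝔟 → σ (x + z) = σ x

/-- The set of primitive additive characters modulo `𝔟`. -/
def PrimChars (K : Type*) [Field K] [NumberField K] (𝔟 : Ideal (𝓞 K)) :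
    Set (𝓞 K → ℂ) :=
  {σ | (σ 0 = 1 ∧ ∀ x y, σ (x + y) = σ x * σ y) ∧ IsCharModI 𝔟 σ ∧
    ∀ 𝔟₁ : Ideal (𝓞 K), 𝔟₁ ∣ 𝔟 → 𝔟₁ ≠ 𝔟 → ¬ IsCharModI 𝔟₁ σ}

/-- The exponential sum
`S_𝔟(N; m) = ∑*_{σ mod 𝔟} ∑_{a mod ᴳ𝔟} σ(F(a) - N) ψ(m.a)`,
where `R` is a complete set of representatives modulo `(ᴳ𝔟)ⁿ`. -/
noncomputable def expSum {K : Type*} [Field K] [NumberField K] {n : ℕ}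
    (c : Fin n → Fin n → (K ≃ₐ[ℚ] K) → (K ≃ₐ[ℚ] K) → 𝓞 K)
    (𝔟 : Ideal (𝓞 K)) (R : Finset (Fin n → 𝓞 K)) (N : 𝓞 K)
    (m : Fin n → K) : ℂ :=
  ∑ᶠ σ ∈ PrimChars K 𝔟, ∑ a ∈ R,
    σ (gqf c a - N) * psiK K (∑ i, m i * ((a i : K)))


/-! ### Auxiliary lemmas -/

section Aux

variable {K : Type*} [Field K] [NumberField K]

lemma gact_gact_symm (τ : K ≃ₐ[ℚ] K) (x : 𝓞 K) : gact K τ (gact K τ.symm x) = x := by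
  have h : gact K τ.symm = (gact K τ).symm := by
    show galRestrict ℤ ℚ K (𝓞 K) τ.symm = _
    have h2 : τ.symm = τ⁻¹ := rfl
    rw [h2, map_inv]; rfl
  rw [h]; exact (gact K τ).apply_symm_apply x

lemma mem_GIdeal_iff {G : Set (K ≃ₐ[ℚ] K)} {𝔟 : Ideal (𝓞 K)} {z : 𝓞 K} :
    z ∈ GIdeal G 𝔟 ↔ ∀ τ ∈ G, z ∈ Ideal.map (gact K τ.symm) 𝔟 := by
  simp [GIdeal, Submodule.mem_iInf]

lemma gact_mem_of_mem_GIdeal {G : Set (K ≃ₐ[ℚ] K)} {𝔟 : Ideal (𝓞 K)} {z : 𝓞 K}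
    (hz : z ∈ GIdeal G 𝔟) {τ : K ≃ₐ[ℚ] K} (hτ : τ ∈ G) : gact K τ z ∈ 𝔟 := by
  have h := mem_GIdeal_iff.1 hz τ hτ
  obtain ⟨y, hy, hyz⟩ := (Ideal.mem_map_iff_of_surjective _ (gact K τ.symm).surjective).1 h
  rw [← hyz, gact_gact_symm]; exact hy

lemma natCast_mem_GIdeal {G : Set (K ≃ₐ[ℚ] K)} {𝔟 : Ideal (𝓞 K)} {k : ℕ}
    (hk : ((k : ℕ) : 𝓞 K) ∈ 𝔟) : ((k : ℕ) : 𝓞 K) ∈ GIdeal G 𝔟 :=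
  mem_GIdeal_iff.2 fun τ _ => by
    have h := Ideal.mem_map_of_mem (gact K τ.symm) hk
    rwa [map_natCast] at h

lemma GIdeal_mono {G : Set (K ≃ₐ[ℚ] K)} {I J : Ideal (𝓞 K)} (h : I ≤ J) :
    GIdeal G I ≤ GIdeal G J :=
  iInf₂_mono fun τ _ => Ideal.map_mono h

lemma mul_mem_GIdeal {G : Set (K ≃ₐ[ℚ] K)} {I J : Ideal (𝓞 K)} {z w : 𝓞 K}
    (hz : z ∈ GIdeal G I) (hw : w ∈ GIdeal G J) : z * w ∈ GIdeal G (I * J) :=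
  mem_GIdeal_iff.2 fun τ hτ => by
    rw [Ideal.map_mul]
    exact Ideal.mul_mem_mul (mem_GIdeal_iff.1 hz τ hτ) (mem_GIdeal_iff.1 hw τ hτ)

lemma psiK_add (x y : K) : psiK K (x + y) = psiK K x * psiK K y := by
  rw [psiK, psiK, psiK, map_add, ← Complex.exp_add]
  congr 1
  push_cast
  ring

lemma psiK_int {x : K} (h : ∃ k : ℤ, Algebra.trace ℚ K x = (k : ℚ)) : psiK K x = 1 := by
  obtain ⟨k, hk⟩ := h
  rw [psiK, hk]
  push_cast
  rw [mul_comm]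
  exact Complex.exp_int_mul_two_pi_mul_I k

lemma char_congr {𝔟 : Ideal (𝓞 K)} {σ : 𝓞 K → ℂ} (hσ : σ ∈ PrimChars K 𝔟)
    {x y : 𝓞 K} (h : x - y ∈ 𝔟) : σ x = σ y := by
  have := hσ.2.1 y (x - y) h
  rwa [add_sub_cancel] at this

lemma char_mem_eq_one {𝔟 : Ideal (𝓞 K)} {σ : 𝓞 K → ℂ} (hσ : σ ∈ PrimChars K 𝔟)
    {z : 𝓞 K} (hz : z ∈ 𝔟) : σ z = 1 := by
  rw [char_congr hσ (by simpa using hz : z - 0 ∈ 𝔟), hσ.1.1]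

lemma twist_mem_primChars {𝔟₁ : Ideal (𝓞 K)} {σ : 𝓞 K → ℂ} (w z : 𝓞 K)
    (hwz : w * z - 1 ∈ 𝔟₁)
    (hσ : σ ∈ PrimChars K 𝔟₁) : (fun x => σ (w * x)) ∈ PrimChars K 𝔟₁ := by
  obtain ⟨⟨h0, hadd⟩, hchar, hprim⟩ := hσ
  refine ⟨⟨by simpa using h0, fun x y => by simp only []; rw [mul_add, hadd]⟩, ?_, ?_⟩
  · intro x z' hz'
    show σ (w * (x + z')) = σ (w * x)
    rw [mul_add]
    exact hchar (w * x) (w * z') (Ideal.mul_mem_left _ _ hz')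
  · intro 𝔠 h𝔠 hne hch
    refine hprim 𝔠 h𝔠 hne ?_
    intro x z' hz'
    have h1 : σ (x + z') = σ (w * (z * (x + z')) ) := by
      refine (char_congr ⟨⟨h0, hadd⟩, hchar, hprim⟩ ?_).symm
      have : w * (z * (x + z')) - (x + z') = (w * z - 1) * (x + z') := by ring
      rw [this]
      exact Ideal.mul_mem_right _ _ hwz
    have h2 : σ (w * (z * x + z * z')) = σ (w * (z * x)) := hch (z * x) (z * z')
      (Ideal.mul_mem_left _ _ hz')
    have h3 : σ (w * (z * x)) = σ x := by
      refine char_congr ⟨⟨h0, hadd⟩, hchar, hprim⟩ ?_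
      have : w * (z * x) - x = (w * z - 1) * x := by ring
      rw [this]
      exact Ideal.mul_mem_right _ _ hwz
    rw [h1, show z * (x + z') = z * x + z * z' by ring, h2, h3]

section Decomp

variable {𝔟 𝔟₁ 𝔟₂ : Ideal (𝓞 K)} {e₁ e₂ : 𝓞 K}
  (h𝔟 : 𝔟 = 𝔟₁ * 𝔟₂) (h2 : 𝔟₂ ≠ ⊥)
  (he : e₁ + e₂ = 1) (he₁ : e₁ ∈ 𝔟₂) (he₂ : e₂ ∈ 𝔟₁)

include h𝔟 h2 he he₁ he₂ in
lemma comp1_mem {σ : 𝓞 K → ℂ} (hσ : σ ∈ PrimChars K 𝔟) :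
    (fun x => σ (e₁ * x)) ∈ PrimChars K 𝔟₁ := by
  obtain ⟨⟨h0, hadd⟩, hchar, hprim⟩ := hσ
  refine ⟨⟨by simpa using h0, fun x y => by simp only []; rw [mul_add, hadd]⟩, ?_, ?_⟩
  · intro x z hz
    show σ (e₁ * (x + z)) = σ (e₁ * x)
    rw [mul_add]
    refine hchar _ _ ?_
    rw [h𝔟, mul_comm e₁ z]
    exact Ideal.mul_mem_mul hz he₁
  · intro 𝔠 h𝔠 hne hch
    refine hprim (𝔠 * 𝔟₂) (by rw [h𝔟]; exact mul_dvd_mul_right h𝔠 𝔟₂) ?_ ?_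
    · intro hEq
      rw [h𝔟] at hEq
      exact hne (mul_right_cancel₀ (by rwa [Ne, Ideal.zero_eq_bot]) hEq)
    · intro x z hz
      have hz₂ : z ∈ 𝔟₂ := Ideal.mul_le_right hz
      have hz𝔠 : z ∈ 𝔠 := Ideal.mul_le_left hz
      have hs1 : σ (e₂ * z) = 1 := by
        refine char_mem_eq_one ⟨⟨h0, hadd⟩, hchar, hprim⟩ ?_
        rw [h𝔟]; exact Ideal.mul_mem_mul he₂ hz₂
      have hs2 : σ (e₁ * z) = 1 := by
        have h := hch 0 z hz𝔠
        simpa [h0] using h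
      have hzdec : σ z = σ (e₁ * z) * σ (e₂ * z) := by
        rw [← hadd]
        congr 1
        linear_combination -z * he
      rw [hadd x z, hzdec, hs1, hs2]
      ring

include h𝔟 h2 he he₁ he₂ in
lemma prod_mem_primChars {ρ₁ ρ₂ : 𝓞 K → ℂ}
    (hρ₁ : ρ₁ ∈ PrimChars K 𝔟₁) (hρ₂ : ρ₂ ∈ PrimChars K 𝔟₂) :
    (fun x => ρ₁ x * ρ₂ x) ∈ PrimChars K 𝔟 := by
  have hsup : 𝔟₁ ⊔ 𝔟₂ = ⊤ := by
    rw [Ideal.eq_top_iff_one, ← he]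
    exact add_mem (Submodule.mem_sup_right he₁) (Submodule.mem_sup_left he₂)
  obtain ⟨⟨h10, h1add⟩, h1char, h1prim⟩ := hρ₁
  obtain ⟨⟨h20, h2add⟩, h2char, h2prim⟩ := hρ₂
  have hρ₁' : ρ₁ ∈ PrimChars K 𝔟₁ := ⟨⟨h10, h1add⟩, h1char, h1prim⟩
  have hρ₂' : ρ₂ ∈ PrimChars K 𝔟₂ := ⟨⟨h20, h2add⟩, h2char, h2prim⟩
  refine ⟨⟨by show ρ₁ 0 * ρ₂ 0 = 1; rw [h10, h20, mul_one], fun x y => by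
      show ρ₁ (x + y) * ρ₂ (x + y) = _; rw [h1add, h2add]; ring⟩, ?_, ?_⟩
  · intro x z hz
    show ρ₁ (x + z) * ρ₂ (x + z) = ρ₁ x * ρ₂ x
    have hz' : z ∈ 𝔟₁ * 𝔟₂ := h𝔟 ▸ hz
    rw [h1char x z (Ideal.mul_le_left hz'), h2char x z (Ideal.mul_le_right hz')]
  · intro 𝔠 h𝔠 hne hch
    have hchβ : ∀ y w', w' ∈ 𝔠 → ρ₁ (y + w') * ρ₂ (y + w') = ρ₁ y * ρ₂ y :=
      fun y w' hw' => hch y w' hw'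
    have key1 : ∀ x, ρ₁ x = ρ₁ (e₁ * x) * ρ₂ (e₁ * x) := by
      intro x
      have hA : ρ₂ (e₁ * x) = 1 :=
        char_mem_eq_one hρ₂' (Ideal.mul_mem_right x 𝔟₂ he₁)
      have hB : ρ₁ (e₁ * x) = ρ₁ x := by
        refine char_congr hρ₁' ?_
        have hEq : e₁ * x - x = -(e₂ * x) := by linear_combination x * he
        rw [hEq]
        exact neg_mem (Ideal.mul_mem_right x 𝔟₁ he₂)
      rw [hA, hB, mul_one]
    have key2 : ∀ x, ρ₂ x = ρ₁ (e₂ * x) * ρ₂ (e₂ * x) := by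
      intro x
      have hA : ρ₁ (e₂ * x) = 1 :=
        char_mem_eq_one hρ₁' (Ideal.mul_mem_right x 𝔟₁ he₂)
      have hB : ρ₂ (e₂ * x) = ρ₂ x := by
        refine char_congr hρ₂' ?_
        have hEq : e₂ * x - x = -(e₁ * x) := by linear_combination x * he
        rw [hEq]
        exact neg_mem (Ideal.mul_mem_right x 𝔟₂ he₁)
      rw [hA, hB, one_mul]
    have hc1 : 𝔠 ≤ 𝔟₁ := by
      by_contra hcle
      refine h1prim (𝔠 ⊔ 𝔟₁) (Ideal.dvd_iff_le.2 le_sup_right)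
        (fun hEq => hcle (hEq ▸ le_sup_left)) ?_
      intro x z hz
      obtain ⟨w, hw, v, hv, rfl⟩ := Submodule.mem_sup.1 hz
      rw [← add_assoc, h1char (x + w) v hv, key1 (x + w), mul_add,
        hchβ (e₁ * x) (e₁ * w) (Ideal.mul_mem_left 𝔠 e₁ hw), ← key1]
    have hc2 : 𝔠 ≤ 𝔟₂ := by
      by_contra hcle
      refine h2prim (𝔠 ⊔ 𝔟₂) (Ideal.dvd_iff_le.2 le_sup_right)
        (fun hEq => hcle (hEq ▸ le_sup_left)) ?_
      intro x z hz
      obtain ⟨w, hw, v, hv, rfl⟩ := Submodule.mem_sup.1 hz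
      rw [← add_assoc, h2char (x + w) v hv, key2 (x + w), mul_add,
        hchβ (e₂ * x) (e₂ * w) (Ideal.mul_mem_left 𝔠 e₂ hw), ← key2]
    refine hne (le_antisymm ?_ (Ideal.le_of_dvd h𝔠))
    rw [h𝔟, Ideal.mul_eq_inf_of_coprime hsup]
    exact le_inf hc1 hc2

end Decomp

lemma gqf_sub_mem {n : ℕ} {c : Fin n → Fin n → (K ≃ₐ[ℚ] K) → (K ≃ₐ[ℚ] K) → 𝓞 K}
    {G : Set (K ≃ₐ[ℚ] K)} (hG : ∀ i j τ τ', c i j τ τ' ≠ 0 → τ ∈ G ∧ τ' ∈ G)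
    {𝔟 : Ideal (𝓞 K)} {x y : Fin n → 𝓞 K} (h : ∀ i, x i - y i ∈ GIdeal G 𝔟) :
    gqf c x - gqf c y ∈ 𝔟 := by
  rw [gqf, gqf, ← Finset.sum_sub_distrib]
  refine Ideal.sum_mem _ fun i _ => ?_
  rw [← Finset.sum_sub_distrib]
  refine Ideal.sum_mem _ fun j _ => ?_
  rw [← Finset.sum_sub_distrib]
  refine Ideal.sum_mem _ fun τ _ => ?_
  rw [← Finset.sum_sub_distrib]
  refine Ideal.sum_mem _ fun τ' _ => ?_
  by_cases hc : c i j τ τ' = 0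
  · simp [hc]
  · obtain ⟨hτ, hτ'⟩ := hG i j τ τ' hc
    have h1 : gact K τ (x i) - gact K τ (y i) ∈ 𝔟 := by
      rw [← map_sub]; exact gact_mem_of_mem_GIdeal (h i) hτ
    have h2 : gact K τ' (x j) - gact K τ' (y j) ∈ 𝔟 := by
      rw [← map_sub]; exact gact_mem_of_mem_GIdeal (h j) hτ'
    have hEq : c i j τ τ' * gact K τ (x i) * gact K τ' (x j) -
        c i j τ τ' * gact K τ (y i) * gact K τ' (y j) =
        c i j τ τ' * gact K τ (x i) * (gact K τ' (x j) - gact K τ' (y j)) +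
        c i j τ τ' * (gact K τ (x i) - gact K τ (y i)) * gact K τ' (y j) := by ring
    rw [hEq]
    exact add_mem (Ideal.mul_mem_left _ _ h2)
      (Ideal.mul_mem_right _ _ (Ideal.mul_mem_left _ _ h1))

lemma gqf_scale_mem {n : ℕ} (c : Fin n → Fin n → (K ≃ₐ[ℚ] K) → (K ≃ₐ[ℚ] K) → 𝓞 K)
    (p q : ℕ) {J : Ideal (𝓞 K)} (hq : ((q : ℕ) : 𝓞 K) ∈ J) (x y : Fin n → 𝓞 K) :
    gqf c (fun i => (p : 𝓞 K) * x i + (q : 𝓞 K) * y i) - (p : 𝓞 K) ^ 2 * gqf c x ∈ J := by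
  rw [gqf, gqf]
  simp only [Finset.mul_sum]
  rw [← Finset.sum_sub_distrib]
  refine Ideal.sum_mem _ fun i _ => ?_
  rw [← Finset.sum_sub_distrib]
  refine Ideal.sum_mem _ fun j _ => ?_
  rw [← Finset.sum_sub_distrib]
  refine Ideal.sum_mem _ fun τ _ => ?_
  rw [← Finset.sum_sub_distrib]
  refine Ideal.sum_mem _ fun τ' _ => ?_
  simp only [map_add, map_mul, map_natCast]
  have hEq : c i j τ τ' * ((p : 𝓞 K) * gact K τ (x i) + (q : 𝓞 K) * gact K τ (y i)) *
      ((p : 𝓞 K) * gact K τ' (x j) + (q : 𝓞 K) * gact K τ' (y j)) -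
      (p : 𝓞 K) ^ 2 * (c i j τ τ' * gact K τ (x i) * gact K τ' (x j)) =
      (q : 𝓞 K) * (c i j τ τ' * ((p : 𝓞 K) * gact K τ (x i) * gact K τ' (y j) +
        (p : 𝓞 K) * gact K τ (y i) * gact K τ' (x j) +
        (q : 𝓞 K) * gact K τ (y i) * gact K τ' (y j))) := by ring
  rw [hEq]
  exact Ideal.mul_mem_right _ _ hq

lemma finsum_mem_prod_mul {α β : Type*} (s : Set α) (t : Set β) (f : α → ℂ) (g : β → ℂ) :
    (∑ᶠ a ∈ s, f a) * (∑ᶠ b ∈ t, g b) = ∑ᶠ p ∈ s ×ˢ t, f p.1 * g p.2 := by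
  classical
  have hsupp : Function.support (fun p : α × β => f p.1 * g p.2) =
      (Function.support f) ×ˢ (Function.support g) := by
    ext p
    simp [Function.mem_support, Set.mem_prod, mul_ne_zero_iff]
  by_cases hf : (s ∩ Function.support f).Finite
  · by_cases hg : (t ∩ Function.support g).Finite
    · rw [finsum_mem_eq_sum f hf, finsum_mem_eq_sum g hg, Finset.sum_mul_sum,
        ← Finset.sum_product']
      symm
      refine finsum_mem_eq_sum_of_inter_support_eq _ ?_
      rw [hsupp, Finset.coe_product, Set.Finite.coe_toFinset, Set.Finite.coe_toFinset,
        Set.prod_inter_prod, Set.prod_inter_prod]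
      congr 1 <;> rw [Set.inter_assoc, Set.inter_self]
    · have hg' : (t ∩ Function.support g).Infinite := hg
      rw [finsum_mem_eq_zero_of_infinite hg', mul_zero]
      rcases Set.eq_empty_or_nonempty (s ∩ Function.support f) with hne | hne
      · symm
        refine finsum_mem_eq_zero_of_forall_eq_zero fun p hp => ?_
        rcases eq_or_ne (f p.1) 0 with h | h
        · rw [h, zero_mul]
        · exact absurd (Set.eq_empty_iff_forall_notMem.1 hne p.1 ⟨hp.1, h⟩) (by simp)
      · symm
        refine finsum_mem_eq_zero_of_infinite ?_
        rw [hsupp, Set.prod_inter_prod]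
        exact Set.Infinite.prod_right hg' hne
  · have hf' : (s ∩ Function.support f).Infinite := hf
    rw [finsum_mem_eq_zero_of_infinite hf', zero_mul]
    rcases Set.eq_empty_or_nonempty (t ∩ Function.support g) with hne | hne
    · symm
      refine finsum_mem_eq_zero_of_forall_eq_zero fun p hp => ?_
      rcases eq_or_ne (g p.2) 0 with h | h
      · rw [h, mul_zero]
      · exact absurd (Set.eq_empty_iff_forall_notMem.1 hne p.2 ⟨hp.2, h⟩) (by simp)
    · symm
      refine finsum_mem_eq_zero_of_infinite ?_
      rw [hsupp, Set.prod_inter_prod]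
      exact Set.Infinite.prod_left hf' hne

end Aux

/-- (Twisted multiplicativity.)  Let `𝔟 = 𝔟₁ 𝔟₂` with
`gcd(N𝔟₁, N𝔟₂) = 1`.  Then for any `N ∈ 𝓞` and any `m` in the dual of `ᴳ𝔟`,
`S_𝔟(N; m) = S_{𝔟₁}(\bar{N𝔟₂}² N; (N𝔟₂) m) · S_{𝔟₂}(\bar{N𝔟₁}² N; (N𝔟₁) m)`,
where `\bar{N𝔟₂}` is a multiplicative inverse of `N𝔟₂` modulo `𝔟₁` and vice
versa. -/
theorem expSum_twisted_multiplicative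
    (K : Type*) [Field K] [NumberField K] [IsGalois ℚ K] (n : ℕ)
    (c : Fin n → Fin n → (K ≃ₐ[ℚ] K) → (K ≃ₐ[ℚ] K) → 𝓞 K)
    (hsym : ∀ i j τ τ', c i j τ τ' = c j i τ' τ)
    (G : Set (K ≃ₐ[ℚ] K))
    (hG : ∀ i j τ τ', c i j τ τ' ≠ 0 → τ ∈ G ∧ τ' ∈ G)
    (𝔟 𝔟₁ 𝔟₂ : Ideal (𝓞 K)) (h𝔟 : 𝔟 = 𝔟₁ * 𝔟₂) (hb : 𝔟 ≠ ⊥)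
    (hcop : Nat.Coprime (Ideal.absNorm 𝔟₁) (Ideal.absNorm 𝔟₂))
    (b₁inv b₂inv : 𝓞 K)
    (hb₂inv : (Ideal.absNorm 𝔟₂ : 𝓞 K) * b₂inv - 1 ∈ 𝔟₁)
    (hb₁inv : (Ideal.absNorm 𝔟₁ : 𝓞 K) * b₁inv - 1 ∈ 𝔟₂)
    (R R₁ R₂ : Finset (Fin n → 𝓞 K))
    (hR : ∀ x : Fin n → 𝓞 K, ∃! r, r ∈ R ∧ ∀ i, x i - r i ∈ GIdeal G 𝔟)
    (hR₁ : ∀ x : Fin n → 𝓞 K, ∃! r, r ∈ R₁ ∧ ∀ i, x i - r i ∈ GIdeal G 𝔟₁)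
    (hR₂ : ∀ x : Fin n → 𝓞 K, ∃! r, r ∈ R₂ ∧ ∀ i, x i - r i ∈ GIdeal G 𝔟₂)
    (N : 𝓞 K) (m : Fin n → K)
    (hm : ∀ i, ∀ z ∈ GIdeal G 𝔟, ∃ k : ℤ,
      Algebra.trace ℚ K (m i * (z : K)) = (k : ℚ)) :
    expSum c 𝔟 R N m =
      expSum c 𝔟₁ R₁ (b₂inv ^ 2 * N)
          (fun i => ((Ideal.absNorm 𝔟₂ : ℕ) : K) * m i) *
        expSum c 𝔟₂ R₂ (b₁inv ^ 2 * N)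
          (fun i => ((Ideal.absNorm 𝔟₁ : ℕ) : K) * m i) := by
  classical
  have hb₁ : 𝔟₁ ≠ ⊥ := fun h => hb (by rw [h𝔟, h, Ideal.bot_mul])
  have hb₂ : 𝔟₂ ≠ ⊥ := fun h => hb (by rw [h𝔟, h, Ideal.mul_bot])
  have h𝔟' : 𝔟 = 𝔟₂ * 𝔟₁ := by rw [h𝔟, mul_comm]
  have hq₁mem : ((Ideal.absNorm 𝔟₁ : ℕ) : 𝓞 K) ∈ 𝔟₁ := Ideal.absNorm_mem 𝔟₁
  have hq₂mem : ((Ideal.absNorm 𝔟₂ : ℕ) : 𝓞 K) ∈ 𝔟₂ := Ideal.absNorm_mem 𝔟₂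
  have hq₁G : ((Ideal.absNorm 𝔟₁ : ℕ) : 𝓞 K) ∈ GIdeal G 𝔟₁ := natCast_mem_GIdeal hq₁mem
  have hq₂G : ((Ideal.absNorm 𝔟₂ : ℕ) : 𝓞 K) ∈ GIdeal G 𝔟₂ := natCast_mem_GIdeal hq₂mem
  have hGle₁ : GIdeal G 𝔟 ≤ GIdeal G 𝔟₁ := GIdeal_mono (by rw [h𝔟]; exact Ideal.mul_le_left)
  have hGle₂ : GIdeal G 𝔟 ≤ GIdeal G 𝔟₂ := GIdeal_mono (by rw [h𝔟]; exact Ideal.mul_le_right)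
  obtain ⟨u, v, huv⟩ : ∃ u v : ℤ,
      ((Ideal.absNorm 𝔟₁ : ℕ) : ℤ) * u + ((Ideal.absNorm 𝔟₂ : ℕ) : ℤ) * v = 1 := by
    refine ⟨Nat.gcdA (Ideal.absNorm 𝔟₁) (Ideal.absNorm 𝔟₂), Nat.gcdB (Ideal.absNorm 𝔟₁) (Ideal.absNorm 𝔟₂), ?_⟩
    have h := Nat.gcd_eq_gcd_ab (Ideal.absNorm 𝔟₁) (Ideal.absNorm 𝔟₂)
    rw [Nat.Coprime.gcd_eq_one hcop] at h
    exact_mod_cast h.symm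
  have he : ((Ideal.absNorm 𝔟₂ : ℕ) : 𝓞 K) * ((v : ℤ) : 𝓞 K) + ((Ideal.absNorm 𝔟₁ : ℕ) : 𝓞 K) * ((u : ℤ) : 𝓞 K) = 1 := by
    have h := congrArg (fun t : ℤ => ((t : ℤ) : 𝓞 K)) huv
    push_cast at h
    linear_combination h
  have he' : ((Ideal.absNorm 𝔟₁ : ℕ) : 𝓞 K) * ((u : ℤ) : 𝓞 K) + ((Ideal.absNorm 𝔟₂ : ℕ) : 𝓞 K) * ((v : ℤ) : 𝓞 K) = 1 := by linear_combination he
  have he₁ : ((Ideal.absNorm 𝔟₂ : ℕ) : 𝓞 K) * ((v : ℤ) : 𝓞 K) ∈ 𝔟₂ := Ideal.mul_mem_right _ _ hq₂mem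
  have he₂ : ((Ideal.absNorm 𝔟₁ : ℕ) : 𝓞 K) * ((u : ℤ) : 𝓞 K) ∈ 𝔟₁ := Ideal.mul_mem_right _ _ hq₁mem
  have hsq₁ : b₂inv ^ 2 * ((Ideal.absNorm 𝔟₂ : ℕ) : 𝓞 K) ^ 2 - 1 ∈ 𝔟₁ := by
    have hEq : b₂inv ^ 2 * ((Ideal.absNorm 𝔟₂ : ℕ) : 𝓞 K) ^ 2 - 1 = (((Ideal.absNorm 𝔟₂ : ℕ) : 𝓞 K) * b₂inv - 1) * (((Ideal.absNorm 𝔟₂ : ℕ) : 𝓞 K) * b₂inv + 1) := by ring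
    rw [hEq]; exact Ideal.mul_mem_right _ _ hb₂inv
  have hsq₂ : b₁inv ^ 2 * ((Ideal.absNorm 𝔟₁ : ℕ) : 𝓞 K) ^ 2 - 1 ∈ 𝔟₂ := by
    have hEq : b₁inv ^ 2 * ((Ideal.absNorm 𝔟₁ : ℕ) : 𝓞 K) ^ 2 - 1 = (((Ideal.absNorm 𝔟₁ : ℕ) : 𝓞 K) * b₁inv - 1) * (((Ideal.absNorm 𝔟₁ : ℕ) : 𝓞 K) * b₁inv + 1) := by ring
    rw [hEq]; exact Ideal.mul_mem_right _ _ hb₁inv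
  have hsq₁' : ((Ideal.absNorm 𝔟₂ : ℕ) : 𝓞 K) ^ 2 * b₂inv ^ 2 - 1 ∈ 𝔟₁ := by
    have hEq : ((Ideal.absNorm 𝔟₂ : ℕ) : 𝓞 K) ^ 2 * b₂inv ^ 2 - 1 = b₂inv ^ 2 * ((Ideal.absNorm 𝔟₂ : ℕ) : 𝓞 K) ^ 2 - 1 := by ring
    rw [hEq]; exact hsq₁
  have hsq₂' : ((Ideal.absNorm 𝔟₁ : ℕ) : 𝓞 K) ^ 2 * b₁inv ^ 2 - 1 ∈ 𝔟₂ := by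
    have hEq : ((Ideal.absNorm 𝔟₁ : ℕ) : 𝓞 K) ^ 2 * b₁inv ^ 2 - 1 = b₁inv ^ 2 * ((Ideal.absNorm 𝔟₁ : ℕ) : 𝓞 K) ^ 2 - 1 := by ring
    rw [hEq]; exact hsq₂
  -- the bijection on primitive characters
  have hmapΦ : Set.MapsTo (fun p : (𝓞 K → ℂ) × (𝓞 K → ℂ) => fun x => p.1 (b₂inv ^ 2 * x) * p.2 (b₁inv ^ 2 * x)) ((PrimChars K 𝔟₁) ×ˢ (PrimChars K 𝔟₂)) (PrimChars K 𝔟) := by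
    rintro ⟨σ₁, σ₂⟩ hp
    have h1 : (fun x => σ₁ (b₂inv ^ 2 * x)) ∈ PrimChars K 𝔟₁ :=
      twist_mem_primChars (b₂inv ^ 2) (((Ideal.absNorm 𝔟₂ : ℕ) : 𝓞 K) ^ 2) hsq₁ hp.1
    have h2 : (fun x => σ₂ (b₁inv ^ 2 * x)) ∈ PrimChars K 𝔟₂ :=
      twist_mem_primChars (b₁inv ^ 2) (((Ideal.absNorm 𝔟₁ : ℕ) : 𝓞 K) ^ 2) hsq₂ hp.2
    exact prod_mem_primChars h𝔟 hb₂ he he₁ he₂ h1 h2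
  have hmapQ : Set.MapsTo (fun σ : 𝓞 K → ℂ => ((fun x => σ (((Ideal.absNorm 𝔟₂ : ℕ) : 𝓞 K) * ((v : ℤ) : 𝓞 K) * (((Ideal.absNorm 𝔟₂ : ℕ) : 𝓞 K) ^ 2 * x))), (fun x => σ (((Ideal.absNorm 𝔟₁ : ℕ) : 𝓞 K) * ((u : ℤ) : 𝓞 K) * (((Ideal.absNorm 𝔟₁ : ℕ) : 𝓞 K) ^ 2 * x))))) (PrimChars K 𝔟) ((PrimChars K 𝔟₁) ×ˢ (PrimChars K 𝔟₂)) := by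
    intro σ hσ
    constructor
    · have hc : (fun x => σ ((((Ideal.absNorm 𝔟₂ : ℕ) : 𝓞 K) * ((v : ℤ) : 𝓞 K)) * x)) ∈ PrimChars K 𝔟₁ :=
        comp1_mem h𝔟 hb₂ he he₁ he₂ hσ
      exact twist_mem_primChars (((Ideal.absNorm 𝔟₂ : ℕ) : 𝓞 K) ^ 2) (b₂inv ^ 2) hsq₁' hc
    · have hc : (fun x => σ ((((Ideal.absNorm 𝔟₁ : ℕ) : 𝓞 K) * ((u : ℤ) : 𝓞 K)) * x)) ∈ PrimChars K 𝔟₂ :=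
        comp1_mem h𝔟' hb₁ he' he₂ he₁ hσ
      exact twist_mem_primChars (((Ideal.absNorm 𝔟₁ : ℕ) : 𝓞 K) ^ 2) (b₁inv ^ 2) hsq₂' hc
  have hinv1 : ∀ p ∈ (PrimChars K 𝔟₁) ×ˢ (PrimChars K 𝔟₂), (fun σ : 𝓞 K → ℂ => ((fun x => σ (((Ideal.absNorm 𝔟₂ : ℕ) : 𝓞 K) * ((v : ℤ) : 𝓞 K) * (((Ideal.absNorm 𝔟₂ : ℕ) : 𝓞 K) ^ 2 * x))), (fun x => σ (((Ideal.absNorm 𝔟₁ : ℕ) : 𝓞 K) * ((u : ℤ) : 𝓞 K) * (((Ideal.absNorm 𝔟₁ : ℕ) : 𝓞 K) ^ 2 * x))))) ((fun p : (𝓞 K → ℂ) × (𝓞 K → ℂ) => fun x => p.1 (b₂inv ^ 2 * x) * p.2 (b₁inv ^ 2 * x)) p) = p := by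
    rintro ⟨σ₁, σ₂⟩ hp
    obtain ⟨hσ₁, hσ₂⟩ := hp
    refine Prod.ext ?_ ?_
    · funext x
      show σ₁ (b₂inv ^ 2 * (((Ideal.absNorm 𝔟₂ : ℕ) : 𝓞 K) * ((v : ℤ) : 𝓞 K) * (((Ideal.absNorm 𝔟₂ : ℕ) : 𝓞 K) ^ 2 * x))) *
        σ₂ (b₁inv ^ 2 * (((Ideal.absNorm 𝔟₂ : ℕ) : 𝓞 K) * ((v : ℤ) : 𝓞 K) * (((Ideal.absNorm 𝔟₂ : ℕ) : 𝓞 K) ^ 2 * x))) = σ₁ x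
      have h2 : σ₂ (b₁inv ^ 2 * (((Ideal.absNorm 𝔟₂ : ℕ) : 𝓞 K) * ((v : ℤ) : 𝓞 K) * (((Ideal.absNorm 𝔟₂ : ℕ) : 𝓞 K) ^ 2 * x))) = 1 := by
        refine char_mem_eq_one hσ₂ ?_
        have hEq : b₁inv ^ 2 * (((Ideal.absNorm 𝔟₂ : ℕ) : 𝓞 K) * ((v : ℤ) : 𝓞 K) * (((Ideal.absNorm 𝔟₂ : ℕ) : 𝓞 K) ^ 2 * x)) =
            (b₁inv ^ 2 * (((v : ℤ) : 𝓞 K) * (((Ideal.absNorm 𝔟₂ : ℕ) : 𝓞 K) ^ 2 * x))) * ((Ideal.absNorm 𝔟₂ : ℕ) : 𝓞 K) := by ring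
        rw [hEq]
        exact Ideal.mul_mem_left _ _ hq₂mem
      have h1 : σ₁ (b₂inv ^ 2 * (((Ideal.absNorm 𝔟₂ : ℕ) : 𝓞 K) * ((v : ℤ) : 𝓞 K) * (((Ideal.absNorm 𝔟₂ : ℕ) : 𝓞 K) ^ 2 * x))) = σ₁ x := by
        refine char_congr hσ₁ ?_
        have hEq : b₂inv ^ 2 * (((Ideal.absNorm 𝔟₂ : ℕ) : 𝓞 K) * ((v : ℤ) : 𝓞 K) * (((Ideal.absNorm 𝔟₂ : ℕ) : 𝓞 K) ^ 2 * x)) - x =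
            (b₂inv ^ 2 * ((Ideal.absNorm 𝔟₂ : ℕ) : 𝓞 K) ^ 2 - 1) * (((Ideal.absNorm 𝔟₂ : ℕ) : 𝓞 K) * ((v : ℤ) : 𝓞 K) * x) + (-(((Ideal.absNorm 𝔟₁ : ℕ) : 𝓞 K) * ((u : ℤ) : 𝓞 K) * x)) := by
          linear_combination x * he
        rw [hEq]
        exact add_mem (Ideal.mul_mem_right _ _ hsq₁) (neg_mem (Ideal.mul_mem_right _ _ he₂))
      rw [h2, h1, mul_one]
    · funext x
      show σ₁ (b₂inv ^ 2 * (((Ideal.absNorm 𝔟₁ : ℕ) : 𝓞 K) * ((u : ℤ) : 𝓞 K) * (((Ideal.absNorm 𝔟₁ : ℕ) : 𝓞 K) ^ 2 * x))) *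
        σ₂ (b₁inv ^ 2 * (((Ideal.absNorm 𝔟₁ : ℕ) : 𝓞 K) * ((u : ℤ) : 𝓞 K) * (((Ideal.absNorm 𝔟₁ : ℕ) : 𝓞 K) ^ 2 * x))) = σ₂ x
      have h1 : σ₁ (b₂inv ^ 2 * (((Ideal.absNorm 𝔟₁ : ℕ) : 𝓞 K) * ((u : ℤ) : 𝓞 K) * (((Ideal.absNorm 𝔟₁ : ℕ) : 𝓞 K) ^ 2 * x))) = 1 := by
        refine char_mem_eq_one hσ₁ ?_
        have hEq : b₂inv ^ 2 * (((Ideal.absNorm 𝔟₁ : ℕ) : 𝓞 K) * ((u : ℤ) : 𝓞 K) * (((Ideal.absNorm 𝔟₁ : ℕ) : 𝓞 K) ^ 2 * x)) =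
            (b₂inv ^ 2 * (((u : ℤ) : 𝓞 K) * (((Ideal.absNorm 𝔟₁ : ℕ) : 𝓞 K) ^ 2 * x))) * ((Ideal.absNorm 𝔟₁ : ℕ) : 𝓞 K) := by ring
        rw [hEq]
        exact Ideal.mul_mem_left _ _ hq₁mem
      have h2 : σ₂ (b₁inv ^ 2 * (((Ideal.absNorm 𝔟₁ : ℕ) : 𝓞 K) * ((u : ℤ) : 𝓞 K) * (((Ideal.absNorm 𝔟₁ : ℕ) : 𝓞 K) ^ 2 * x))) = σ₂ x := by
        refine char_congr hσ₂ ?_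
        have hEq : b₁inv ^ 2 * (((Ideal.absNorm 𝔟₁ : ℕ) : 𝓞 K) * ((u : ℤ) : 𝓞 K) * (((Ideal.absNorm 𝔟₁ : ℕ) : 𝓞 K) ^ 2 * x)) - x =
            (b₁inv ^ 2 * ((Ideal.absNorm 𝔟₁ : ℕ) : 𝓞 K) ^ 2 - 1) * (((Ideal.absNorm 𝔟₁ : ℕ) : 𝓞 K) * ((u : ℤ) : 𝓞 K) * x) + (-(((Ideal.absNorm 𝔟₂ : ℕ) : 𝓞 K) * ((v : ℤ) : 𝓞 K) * x)) := by
          linear_combination x * he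
        rw [hEq]
        exact add_mem (Ideal.mul_mem_right _ _ hsq₂) (neg_mem (Ideal.mul_mem_right _ _ he₁))
      rw [h1, h2, one_mul]
  have hinv2 : ∀ σ ∈ PrimChars K 𝔟, (fun p : (𝓞 K → ℂ) × (𝓞 K → ℂ) => fun x => p.1 (b₂inv ^ 2 * x) * p.2 (b₁inv ^ 2 * x)) ((fun σ : 𝓞 K → ℂ => ((fun x => σ (((Ideal.absNorm 𝔟₂ : ℕ) : 𝓞 K) * ((v : ℤ) : 𝓞 K) * (((Ideal.absNorm 𝔟₂ : ℕ) : 𝓞 K) ^ 2 * x))), (fun x => σ (((Ideal.absNorm 𝔟₁ : ℕ) : 𝓞 K) * ((u : ℤ) : 𝓞 K) * (((Ideal.absNorm 𝔟₁ : ℕ) : 𝓞 K) ^ 2 * x))))) σ) = σ := by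
    intro σ hσ
    funext x
    show σ (((Ideal.absNorm 𝔟₂ : ℕ) : 𝓞 K) * ((v : ℤ) : 𝓞 K) * (((Ideal.absNorm 𝔟₂ : ℕ) : 𝓞 K) ^ 2 * (b₂inv ^ 2 * x))) *
      σ (((Ideal.absNorm 𝔟₁ : ℕ) : 𝓞 K) * ((u : ℤ) : 𝓞 K) * (((Ideal.absNorm 𝔟₁ : ℕ) : 𝓞 K) ^ 2 * (b₁inv ^ 2 * x))) = σ x
    rw [← hσ.1.2]
    refine char_congr hσ ?_
    have hEq : ((Ideal.absNorm 𝔟₂ : ℕ) : 𝓞 K) * ((v : ℤ) : 𝓞 K) * (((Ideal.absNorm 𝔟₂ : ℕ) : 𝓞 K) ^ 2 * (b₂inv ^ 2 * x)) +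
        ((Ideal.absNorm 𝔟₁ : ℕ) : 𝓞 K) * ((u : ℤ) : 𝓞 K) * (((Ideal.absNorm 𝔟₁ : ℕ) : 𝓞 K) ^ 2 * (b₁inv ^ 2 * x)) - x =
        (b₂inv ^ 2 * ((Ideal.absNorm 𝔟₂ : ℕ) : 𝓞 K) ^ 2 - 1) * ((((Ideal.absNorm 𝔟₂ : ℕ) : 𝓞 K) * ((v : ℤ) : 𝓞 K)) * x) +
        (b₁inv ^ 2 * ((Ideal.absNorm 𝔟₁ : ℕ) : 𝓞 K) ^ 2 - 1) * ((((Ideal.absNorm 𝔟₁ : ℕ) : 𝓞 K) * ((u : ℤ) : 𝓞 K)) * x) := by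
      linear_combination x * he
    rw [hEq]
    refine add_mem ?_ ?_
    · rw [h𝔟]
      exact Ideal.mul_mem_mul hsq₁ (Ideal.mul_mem_right _ _ he₁)
    · rw [h𝔟']
      exact Ideal.mul_mem_mul hsq₂ (Ideal.mul_mem_right _ _ he₂)
  have hbij : Set.BijOn (fun p : (𝓞 K → ℂ) × (𝓞 K → ℂ) => fun x => p.1 (b₂inv ^ 2 * x) * p.2 (b₁inv ^ 2 * x)) ((PrimChars K 𝔟₁) ×ˢ (PrimChars K 𝔟₂)) (PrimChars K 𝔟) :=
    Set.InvOn.bijOn ⟨fun p hp => hinv1 p hp, fun σ hσ => hinv2 σ hσ⟩ hmapΦ hmapQ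
  -- representatives
  have hΘmem : ∀ p : (Fin n → 𝓞 K) × (Fin n → 𝓞 K), (fun p : (Fin n → 𝓞 K) × (Fin n → 𝓞 K) => (hR (fun i => ((Ideal.absNorm 𝔟₂ : ℕ) : 𝓞 K) * p.1 i + ((Ideal.absNorm 𝔟₁ : ℕ) : 𝓞 K) * p.2 i)).exists.choose) p ∈ R :=
    fun p => (hR (fun i => ((Ideal.absNorm 𝔟₂ : ℕ) : 𝓞 K) * p.1 i + ((Ideal.absNorm 𝔟₁ : ℕ) : 𝓞 K) * p.2 i)).exists.choose_spec.1
  have hΘcong : ∀ p : (Fin n → 𝓞 K) × (Fin n → 𝓞 K), ∀ i,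
      (((Ideal.absNorm 𝔟₂ : ℕ) : 𝓞 K) * p.1 i + ((Ideal.absNorm 𝔟₁ : ℕ) : 𝓞 K) * p.2 i) - (fun p : (Fin n → 𝓞 K) × (Fin n → 𝓞 K) => (hR (fun i => ((Ideal.absNorm 𝔟₂ : ℕ) : 𝓞 K) * p.1 i + ((Ideal.absNorm 𝔟₁ : ℕ) : 𝓞 K) * p.2 i)).exists.choose) p i ∈ GIdeal G 𝔟 :=
    fun p i => (hR (fun i => ((Ideal.absNorm 𝔟₂ : ℕ) : 𝓞 K) * p.1 i + ((Ideal.absNorm 𝔟₁ : ℕ) : 𝓞 K) * p.2 i)).exists.choose_spec.2 i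
  have hΞ₁mem : ∀ a : Fin n → 𝓞 K, ((fun a : Fin n → 𝓞 K => ((hR₁ (fun i => ((v : ℤ) : 𝓞 K) * a i)).exists.choose, (hR₂ (fun i => ((u : ℤ) : 𝓞 K) * a i)).exists.choose)) a).1 ∈ R₁ :=
    fun a => (hR₁ (fun i => ((v : ℤ) : 𝓞 K) * a i)).exists.choose_spec.1
  have hΞ₁cong : ∀ (a : Fin n → 𝓞 K) i, ((v : ℤ) : 𝓞 K) * a i - ((fun a : Fin n → 𝓞 K => ((hR₁ (fun i => ((v : ℤ) : 𝓞 K) * a i)).exists.choose, (hR₂ (fun i => ((u : ℤ) : 𝓞 K) * a i)).exists.choose)) a).1 i ∈ GIdeal G 𝔟₁ :=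
    fun a i => (hR₁ (fun i => ((v : ℤ) : 𝓞 K) * a i)).exists.choose_spec.2 i
  have hΞ₂mem : ∀ a : Fin n → 𝓞 K, ((fun a : Fin n → 𝓞 K => ((hR₁ (fun i => ((v : ℤ) : 𝓞 K) * a i)).exists.choose, (hR₂ (fun i => ((u : ℤ) : 𝓞 K) * a i)).exists.choose)) a).2 ∈ R₂ :=
    fun a => (hR₂ (fun i => ((u : ℤ) : 𝓞 K) * a i)).exists.choose_spec.1
  have hΞ₂cong : ∀ (a : Fin n → 𝓞 K) i, ((u : ℤ) : 𝓞 K) * a i - ((fun a : Fin n → 𝓞 K => ((hR₁ (fun i => ((v : ℤ) : 𝓞 K) * a i)).exists.choose, (hR₂ (fun i => ((u : ℤ) : 𝓞 K) * a i)).exists.choose)) a).2 i ∈ GIdeal G 𝔟₂ :=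
    fun a i => (hR₂ (fun i => ((u : ℤ) : 𝓞 K) * a i)).exists.choose_spec.2 i
  have huniq : ∀ {r r' : Fin n → 𝓞 K}, r ∈ R → r' ∈ R →
      (∀ i, r i - r' i ∈ GIdeal G 𝔟) → r = r' :=
    fun {r r'} hr hr' hd => (hR r).unique ⟨hr, fun i => by simp⟩ ⟨hr', hd⟩
  have huniq₁ : ∀ {r r' : Fin n → 𝓞 K}, r ∈ R₁ → r' ∈ R₁ →
      (∀ i, r i - r' i ∈ GIdeal G 𝔟₁) → r = r' :=
    fun {r r'} hr hr' hd => (hR₁ r).unique ⟨hr, fun i => by simp⟩ ⟨hr', hd⟩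
  have huniq₂ : ∀ {r r' : Fin n → 𝓞 K}, r ∈ R₂ → r' ∈ R₂ →
      (∀ i, r i - r' i ∈ GIdeal G 𝔟₂) → r = r' :=
    fun {r r'} hr hr' hd => (hR₂ r).unique ⟨hr, fun i => by simp⟩ ⟨hr', hd⟩
  have hleft : ∀ p ∈ R₁ ×ˢ R₂, (fun a : Fin n → 𝓞 K => ((hR₁ (fun i => ((v : ℤ) : 𝓞 K) * a i)).exists.choose, (hR₂ (fun i => ((u : ℤ) : 𝓞 K) * a i)).exists.choose)) ((fun p : (Fin n → 𝓞 K) × (Fin n → 𝓞 K) => (hR (fun i => ((Ideal.absNorm 𝔟₂ : ℕ) : 𝓞 K) * p.1 i + ((Ideal.absNorm 𝔟₁ : ℕ) : 𝓞 K) * p.2 i)).exists.choose) p) = p := by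
    intro p hp
    rw [Finset.mem_product] at hp
    refine Prod.ext ?_ ?_
    · refine huniq₁ (hΞ₁mem ((fun p : (Fin n → 𝓞 K) × (Fin n → 𝓞 K) => (hR (fun i => ((Ideal.absNorm 𝔟₂ : ℕ) : 𝓞 K) * p.1 i + ((Ideal.absNorm 𝔟₁ : ℕ) : 𝓞 K) * p.2 i)).exists.choose) p)) hp.1 fun i => ?_
      have hEq : ((fun a : Fin n → 𝓞 K => ((hR₁ (fun i => ((v : ℤ) : 𝓞 K) * a i)).exists.choose, (hR₂ (fun i => ((u : ℤ) : 𝓞 K) * a i)).exists.choose)) ((fun p : (Fin n → 𝓞 K) × (Fin n → 𝓞 K) => (hR (fun i => ((Ideal.absNorm 𝔟₂ : ℕ) : 𝓞 K) * p.1 i + ((Ideal.absNorm 𝔟₁ : ℕ) : 𝓞 K) * p.2 i)).exists.choose) p)).1 i - p.1 i =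
          -(((v : ℤ) : 𝓞 K) * ((fun p : (Fin n → 𝓞 K) × (Fin n → 𝓞 K) => (hR (fun i => ((Ideal.absNorm 𝔟₂ : ℕ) : 𝓞 K) * p.1 i + ((Ideal.absNorm 𝔟₁ : ℕ) : 𝓞 K) * p.2 i)).exists.choose) p) i - ((fun a : Fin n → 𝓞 K => ((hR₁ (fun i => ((v : ℤ) : 𝓞 K) * a i)).exists.choose, (hR₂ (fun i => ((u : ℤ) : 𝓞 K) * a i)).exists.choose)) ((fun p : (Fin n → 𝓞 K) × (Fin n → 𝓞 K) => (hR (fun i => ((Ideal.absNorm 𝔟₂ : ℕ) : 𝓞 K) * p.1 i + ((Ideal.absNorm 𝔟₁ : ℕ) : 𝓞 K) * p.2 i)).exists.choose) p)).1 i)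
          + (-(((v : ℤ) : 𝓞 K) * ((((Ideal.absNorm 𝔟₂ : ℕ) : 𝓞 K) * p.1 i + ((Ideal.absNorm 𝔟₁ : ℕ) : 𝓞 K) * p.2 i) - (fun p : (Fin n → 𝓞 K) × (Fin n → 𝓞 K) => (hR (fun i => ((Ideal.absNorm 𝔟₂ : ℕ) : 𝓞 K) * p.1 i + ((Ideal.absNorm 𝔟₁ : ℕ) : 𝓞 K) * p.2 i)).exists.choose) p i)))
          + (-(((Ideal.absNorm 𝔟₁ : ℕ) : 𝓞 K) * (((u : ℤ) : 𝓞 K) * p.1 i))) + ((v : ℤ) : 𝓞 K) * (((Ideal.absNorm 𝔟₁ : ℕ) : 𝓞 K) * p.2 i) := by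
        linear_combination (p.1 i) * he
      rw [hEq]
      exact add_mem (add_mem (add_mem (neg_mem (hΞ₁cong ((fun p : (Fin n → 𝓞 K) × (Fin n → 𝓞 K) => (hR (fun i => ((Ideal.absNorm 𝔟₂ : ℕ) : 𝓞 K) * p.1 i + ((Ideal.absNorm 𝔟₁ : ℕ) : 𝓞 K) * p.2 i)).exists.choose) p) i))
        (neg_mem (Ideal.mul_mem_left _ _ (hGle₁ (hΘcong p i)))))
        (neg_mem (Ideal.mul_mem_right _ _ hq₁G)))
        (Ideal.mul_mem_left _ _ (Ideal.mul_mem_right _ _ hq₁G))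
    · refine huniq₂ (hΞ₂mem ((fun p : (Fin n → 𝓞 K) × (Fin n → 𝓞 K) => (hR (fun i => ((Ideal.absNorm 𝔟₂ : ℕ) : 𝓞 K) * p.1 i + ((Ideal.absNorm 𝔟₁ : ℕ) : 𝓞 K) * p.2 i)).exists.choose) p)) hp.2 fun i => ?_
      have hEq : ((fun a : Fin n → 𝓞 K => ((hR₁ (fun i => ((v : ℤ) : 𝓞 K) * a i)).exists.choose, (hR₂ (fun i => ((u : ℤ) : 𝓞 K) * a i)).exists.choose)) ((fun p : (Fin n → 𝓞 K) × (Fin n → 𝓞 K) => (hR (fun i => ((Ideal.absNorm 𝔟₂ : ℕ) : 𝓞 K) * p.1 i + ((Ideal.absNorm 𝔟₁ : ℕ) : 𝓞 K) * p.2 i)).exists.choose) p)).2 i - p.2 i =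
          -(((u : ℤ) : 𝓞 K) * ((fun p : (Fin n → 𝓞 K) × (Fin n → 𝓞 K) => (hR (fun i => ((Ideal.absNorm 𝔟₂ : ℕ) : 𝓞 K) * p.1 i + ((Ideal.absNorm 𝔟₁ : ℕ) : 𝓞 K) * p.2 i)).exists.choose) p) i - ((fun a : Fin n → 𝓞 K => ((hR₁ (fun i => ((v : ℤ) : 𝓞 K) * a i)).exists.choose, (hR₂ (fun i => ((u : ℤ) : 𝓞 K) * a i)).exists.choose)) ((fun p : (Fin n → 𝓞 K) × (Fin n → 𝓞 K) => (hR (fun i => ((Ideal.absNorm 𝔟₂ : ℕ) : 𝓞 K) * p.1 i + ((Ideal.absNorm 𝔟₁ : ℕ) : 𝓞 K) * p.2 i)).exists.choose) p)).2 i)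
          + (-(((u : ℤ) : 𝓞 K) * ((((Ideal.absNorm 𝔟₂ : ℕ) : 𝓞 K) * p.1 i + ((Ideal.absNorm 𝔟₁ : ℕ) : 𝓞 K) * p.2 i) - (fun p : (Fin n → 𝓞 K) × (Fin n → 𝓞 K) => (hR (fun i => ((Ideal.absNorm 𝔟₂ : ℕ) : 𝓞 K) * p.1 i + ((Ideal.absNorm 𝔟₁ : ℕ) : 𝓞 K) * p.2 i)).exists.choose) p i)))
          + (-(((Ideal.absNorm 𝔟₂ : ℕ) : 𝓞 K) * (((v : ℤ) : 𝓞 K) * p.2 i))) + ((u : ℤ) : 𝓞 K) * (((Ideal.absNorm 𝔟₂ : ℕ) : 𝓞 K) * p.1 i) := by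
        linear_combination (p.2 i) * he
      rw [hEq]
      exact add_mem (add_mem (add_mem (neg_mem (hΞ₂cong ((fun p : (Fin n → 𝓞 K) × (Fin n → 𝓞 K) => (hR (fun i => ((Ideal.absNorm 𝔟₂ : ℕ) : 𝓞 K) * p.1 i + ((Ideal.absNorm 𝔟₁ : ℕ) : 𝓞 K) * p.2 i)).exists.choose) p) i))
        (neg_mem (Ideal.mul_mem_left _ _ (hGle₂ (hΘcong p i)))))
        (neg_mem (Ideal.mul_mem_right _ _ hq₂G)))
        (Ideal.mul_mem_left _ _ (Ideal.mul_mem_right _ _ hq₂G))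
  have hright : ∀ a ∈ R, (fun p : (Fin n → 𝓞 K) × (Fin n → 𝓞 K) => (hR (fun i => ((Ideal.absNorm 𝔟₂ : ℕ) : 𝓞 K) * p.1 i + ((Ideal.absNorm 𝔟₁ : ℕ) : 𝓞 K) * p.2 i)).exists.choose) ((fun a : Fin n → 𝓞 K => ((hR₁ (fun i => ((v : ℤ) : 𝓞 K) * a i)).exists.choose, (hR₂ (fun i => ((u : ℤ) : 𝓞 K) * a i)).exists.choose)) a) = a := by
    intro a ha
    refine huniq (hΘmem ((fun a : Fin n → 𝓞 K => ((hR₁ (fun i => ((v : ℤ) : 𝓞 K) * a i)).exists.choose, (hR₂ (fun i => ((u : ℤ) : 𝓞 K) * a i)).exists.choose)) a)) ha fun i => ?_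
    have hEq : (fun p : (Fin n → 𝓞 K) × (Fin n → 𝓞 K) => (hR (fun i => ((Ideal.absNorm 𝔟₂ : ℕ) : 𝓞 K) * p.1 i + ((Ideal.absNorm 𝔟₁ : ℕ) : 𝓞 K) * p.2 i)).exists.choose) ((fun a : Fin n → 𝓞 K => ((hR₁ (fun i => ((v : ℤ) : 𝓞 K) * a i)).exists.choose, (hR₂ (fun i => ((u : ℤ) : 𝓞 K) * a i)).exists.choose)) a) i - a i =
        -((((Ideal.absNorm 𝔟₂ : ℕ) : 𝓞 K) * ((fun a : Fin n → 𝓞 K => ((hR₁ (fun i => ((v : ℤ) : 𝓞 K) * a i)).exists.choose, (hR₂ (fun i => ((u : ℤ) : 𝓞 K) * a i)).exists.choose)) a).1 i + ((Ideal.absNorm 𝔟₁ : ℕ) : 𝓞 K) * ((fun a : Fin n → 𝓞 K => ((hR₁ (fun i => ((v : ℤ) : 𝓞 K) * a i)).exists.choose, (hR₂ (fun i => ((u : ℤ) : 𝓞 K) * a i)).exists.choose)) a).2 i) - (fun p : (Fin n → 𝓞 K) × (Fin n → 𝓞 K) => (hR (fun i => ((Ideal.absNorm 𝔟₂ : ℕ)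 : 𝓞 K) * p.1 i + ((Ideal.absNorm 𝔟₁ : ℕ) : 𝓞 K) * p.2 i)).exists.choose) ((fun a : Fin n → 𝓞 K => ((hR₁ (fun i => ((v : ℤ) : 𝓞 K) * a i)).exists.choose, (hR₂ (fun i => ((u : ℤ) : 𝓞 K) * a i)).exists.choose)) a) i)
        + (-(((Ideal.absNorm 𝔟₂ : ℕ) : 𝓞 K) * (((v : ℤ) : 𝓞 K) * a i - ((fun a : Fin n → 𝓞 K => ((hR₁ (fun i => ((v : ℤ) : 𝓞 K) * a i)).exists.choose, (hR₂ (fun i => ((u : ℤ) : 𝓞 K) * a i)).exists.choose)) a).1 i)))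
        + (-(((Ideal.absNorm 𝔟₁ : ℕ) : 𝓞 K) * (((u : ℤ) : 𝓞 K) * a i - ((fun a : Fin n → 𝓞 K => ((hR₁ (fun i => ((v : ℤ) : 𝓞 K) * a i)).exists.choose, (hR₂ (fun i => ((u : ℤ) : 𝓞 K) * a i)).exists.choose)) a).2 i))) := by
      linear_combination (a i) * he
    rw [hEq]
    refine add_mem (add_mem (neg_mem (hΘcong ((fun a : Fin n → 𝓞 K => ((hR₁ (fun i => ((v : ℤ) : 𝓞 K) * a i)).exists.choose, (hR₂ (fun i => ((u : ℤ) : 𝓞 K) * a i)).exists.choose)) a) i)) (neg_mem ?_)) (neg_mem ?_)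
    · have h := mul_mem_GIdeal hq₂G (hΞ₁cong a i)
      rwa [← h𝔟'] at h
    · have h := mul_mem_GIdeal hq₁G (hΞ₂cong a i)
      rwa [← h𝔟] at h
  -- the core identity
  have hmain : ∀ σp ∈ (PrimChars K 𝔟₁) ×ˢ (PrimChars K 𝔟₂),
      (∑ a ∈ R₁, σp.1 (gqf c a - b₂inv ^ 2 * N) *
          psiK K (∑ i, ((Ideal.absNorm 𝔟₂ : ℕ) : K) * m i * ((a i : K)))) *
      (∑ a ∈ R₂, σp.2 (gqf c a - b₁inv ^ 2 * N) *
          psiK K (∑ i, ((Ideal.absNorm 𝔟₁ : ℕ) : K) * m i * ((a i : K)))) =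
      ∑ a ∈ R, (fun p : (𝓞 K → ℂ) × (𝓞 K → ℂ) => fun x => p.1 (b₂inv ^ 2 * x) * p.2 (b₁inv ^ 2 * x)) σp (gqf c a - N) * psiK K (∑ i, m i * ((a i : K))) := by
    rintro ⟨σ₁, σ₂⟩ hσp
    obtain ⟨hσ₁, hσ₂⟩ := hσp
    rw [Finset.sum_mul_sum, ← Finset.sum_product']
    refine Finset.sum_nbij' (fun p => (fun p : (Fin n → 𝓞 K) × (Fin n → 𝓞 K) => (hR (fun i => ((Ideal.absNorm 𝔟₂ : ℕ) : 𝓞 K) * p.1 i + ((Ideal.absNorm 𝔟₁ : ℕ) : 𝓞 K) * p.2 i)).exists.choose) p) (fun a => (fun a : Fin n → 𝓞 K => ((hR₁ (fun i => ((v : ℤ) : 𝓞 K) * a i)).exists.choose, (hR₂ (fun i => ((u : ℤ) : 𝓞 K) * a i)).exists.choose)) a)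
      (fun p _ => hΘmem p) (fun a ha => Finset.mem_product.2 ⟨hΞ₁mem a, hΞ₂mem a⟩)
      hleft hright ?_
    intro p hp
    have hcong1 : σ₁ (b₂inv ^ 2 * (gqf c ((fun p : (Fin n → 𝓞 K) × (Fin n → 𝓞 K) => (hR (fun i => ((Ideal.absNorm 𝔟₂ : ℕ) : 𝓞 K) * p.1 i + ((Ideal.absNorm 𝔟₁ : ℕ) : 𝓞 K) * p.2 i)).exists.choose) p) - N)) =
        σ₁ (gqf c p.1 - b₂inv ^ 2 * N) := by
      refine char_congr hσ₁ ?_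
      have hF1 : gqf c (fun i => ((Ideal.absNorm 𝔟₂ : ℕ) : 𝓞 K) * p.1 i + ((Ideal.absNorm 𝔟₁ : ℕ) : 𝓞 K) * p.2 i) - gqf c ((fun p : (Fin n → 𝓞 K) × (Fin n → 𝓞 K) => (hR (fun i => ((Ideal.absNorm 𝔟₂ : ℕ) : 𝓞 K) * p.1 i + ((Ideal.absNorm 𝔟₁ : ℕ) : 𝓞 K) * p.2 i)).exists.choose) p) ∈ 𝔟 :=
        gqf_sub_mem hG (hΘcong p)
      have hF2 : gqf c (fun i => ((Ideal.absNorm 𝔟₂ : ℕ) : 𝓞 K) * p.1 i + ((Ideal.absNorm 𝔟₁ : ℕ) : 𝓞 K) * p.2 i) - ((Ideal.absNorm 𝔟₂ : ℕ) : 𝓞 K) ^ 2 * gqf c p.1 ∈ 𝔟₁ :=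
        gqf_scale_mem c (Ideal.absNorm 𝔟₂) (Ideal.absNorm 𝔟₁) (Ideal.absNorm_mem 𝔟₁) p.1 p.2
      have hEq : b₂inv ^ 2 * (gqf c ((fun p : (Fin n → 𝓞 K) × (Fin n → 𝓞 K) => (hR (fun i => ((Ideal.absNorm 𝔟₂ : ℕ) : 𝓞 K) * p.1 i + ((Ideal.absNorm 𝔟₁ : ℕ) : 𝓞 K) * p.2 i)).exists.choose) p) - N) - (gqf c p.1 - b₂inv ^ 2 * N) =
          (-(b₂inv ^ 2 * (gqf c (fun i => ((Ideal.absNorm 𝔟₂ : ℕ) : 𝓞 K) * p.1 i + ((Ideal.absNorm 𝔟₁ : ℕ) : 𝓞 K) * p.2 i) - gqf c ((fun p : (Fin n → 𝓞 K) × (Fin n → 𝓞 K) => (hR (fun i => ((Ideal.absNorm 𝔟₂ : ℕ) : 𝓞 K) * p.1 i + ((Ideal.absNorm 𝔟₁ : ℕ) : 𝓞 K) * p.2 i)).exists.choose) p))))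
          + b₂inv ^ 2 * (gqf c (fun i => ((Ideal.absNorm 𝔟₂ : ℕ) : 𝓞 K) * p.1 i + ((Ideal.absNorm 𝔟₁ : ℕ) : 𝓞 K) * p.2 i) - ((Ideal.absNorm 𝔟₂ : ℕ) : 𝓞 K) ^ 2 * gqf c p.1)
          + (b₂inv ^ 2 * ((Ideal.absNorm 𝔟₂ : ℕ) : 𝓞 K) ^ 2 - 1) * gqf c p.1 := by ring
      rw [hEq]
      exact add_mem (add_mem (neg_mem (Ideal.mul_mem_left _ _ (Ideal.mul_le_left (show _ ∈ 𝔟₁ * 𝔟₂ by rw [← h𝔟]; exact hF1))))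
        (Ideal.mul_mem_left _ _ hF2)) (Ideal.mul_mem_right _ _ hsq₁)
    have hcong2 : σ₂ (b₁inv ^ 2 * (gqf c ((fun p : (Fin n → 𝓞 K) × (Fin n → 𝓞 K) => (hR (fun i => ((Ideal.absNorm 𝔟₂ : ℕ) : 𝓞 K) * p.1 i + ((Ideal.absNorm 𝔟₁ : ℕ) : 𝓞 K) * p.2 i)).exists.choose) p) - N)) =
        σ₂ (gqf c p.2 - b₁inv ^ 2 * N) := by
      refine char_congr hσ₂ ?_
      have hF1 : gqf c (fun i => ((Ideal.absNorm 𝔟₂ : ℕ) : 𝓞 K) * p.1 i + ((Ideal.absNorm 𝔟₁ : ℕ) : 𝓞 K) * p.2 i) - gqf c ((fun p : (Fin n → 𝓞 K) × (Fin n → 𝓞 K) => (hR (fun i => ((Ideal.absNorm 𝔟₂ : ℕ) : 𝓞 K) * p.1 i + ((Ideal.absNorm 𝔟₁ : ℕ) : 𝓞 K) * p.2 i)).exists.choose) p) ∈ 𝔟 :=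
        gqf_sub_mem hG (hΘcong p)
      have hF2 : gqf c (fun i => ((Ideal.absNorm 𝔟₁ : ℕ) : 𝓞 K) * p.2 i + ((Ideal.absNorm 𝔟₂ : ℕ) : 𝓞 K) * p.1 i) - ((Ideal.absNorm 𝔟₁ : ℕ) : 𝓞 K) ^ 2 * gqf c p.2 ∈ 𝔟₂ :=
        gqf_scale_mem c (Ideal.absNorm 𝔟₁) (Ideal.absNorm 𝔟₂) (Ideal.absNorm_mem 𝔟₂) p.2 p.1
      have hflip : (fun i => ((Ideal.absNorm 𝔟₁ : ℕ) : 𝓞 K) * p.2 i + ((Ideal.absNorm 𝔟₂ : ℕ) : 𝓞 K) * p.1 i) =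
          (fun i => ((Ideal.absNorm 𝔟₂ : ℕ) : 𝓞 K) * p.1 i + ((Ideal.absNorm 𝔟₁ : ℕ) : 𝓞 K) * p.2 i) := by
        funext i; ring
      rw [hflip] at hF2
      have hEq : b₁inv ^ 2 * (gqf c ((fun p : (Fin n → 𝓞 K) × (Fin n → 𝓞 K) => (hR (fun i => ((Ideal.absNorm 𝔟₂ : ℕ) : 𝓞 K) * p.1 i + ((Ideal.absNorm 𝔟₁ : ℕ) : 𝓞 K) * p.2 i)).exists.choose) p) - N) - (gqf c p.2 - b₁inv ^ 2 * N) =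
          (-(b₁inv ^ 2 * (gqf c (fun i => ((Ideal.absNorm 𝔟₂ : ℕ) : 𝓞 K) * p.1 i + ((Ideal.absNorm 𝔟₁ : ℕ) : 𝓞 K) * p.2 i) - gqf c ((fun p : (Fin n → 𝓞 K) × (Fin n → 𝓞 K) => (hR (fun i => ((Ideal.absNorm 𝔟₂ : ℕ) : 𝓞 K) * p.1 i + ((Ideal.absNorm 𝔟₁ : ℕ) : 𝓞 K) * p.2 i)).exists.choose) p))))
          + b₁inv ^ 2 * (gqf c (fun i => ((Ideal.absNorm 𝔟₂ : ℕ) : 𝓞 K) * p.1 i + ((Ideal.absNorm 𝔟₁ : ℕ) : 𝓞 K) * p.2 i) - ((Ideal.absNorm 𝔟₁ : ℕ) : 𝓞 K) ^ 2 * gqf c p.2)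
          + (b₁inv ^ 2 * ((Ideal.absNorm 𝔟₁ : ℕ) : 𝓞 K) ^ 2 - 1) * gqf c p.2 := by ring
      rw [hEq]
      exact add_mem (add_mem (neg_mem (Ideal.mul_mem_left _ _ (Ideal.mul_le_right (show _ ∈ 𝔟₁ * 𝔟₂ by rw [← h𝔟]; exact hF1))))
        (Ideal.mul_mem_left _ _ hF2)) (Ideal.mul_mem_right _ _ hsq₂)
    have hψ : psiK K (∑ i, m i * (((fun p : (Fin n → 𝓞 K) × (Fin n → 𝓞 K) => (hR (fun i => ((Ideal.absNorm 𝔟₂ : ℕ) : 𝓞 K) * p.1 i + ((Ideal.absNorm 𝔟₁ : ℕ) : 𝓞 K) * p.2 i)).exists.choose) p i : K))) =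
        psiK K (∑ i, ((Ideal.absNorm 𝔟₂ : ℕ) : K) * m i * ((p.1 i : K))) *
        psiK K (∑ i, ((Ideal.absNorm 𝔟₁ : ℕ) : K) * m i * ((p.2 i : K))) := by
      have hhmem : ∀ i, (fun p : (Fin n → 𝓞 K) × (Fin n → 𝓞 K) => (hR (fun i => ((Ideal.absNorm 𝔟₂ : ℕ) : 𝓞 K) * p.1 i + ((Ideal.absNorm 𝔟₁ : ℕ) : 𝓞 K) * p.2 i)).exists.choose) p i - (((Ideal.absNorm 𝔟₂ : ℕ) : 𝓞 K) * p.1 i + ((Ideal.absNorm 𝔟₁ : ℕ) : 𝓞 K) * p.2 i) ∈ GIdeal G 𝔟 := by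
        intro i
        have h := neg_mem (hΘcong p i)
        rwa [neg_sub] at h
      have hsum : (∑ i, m i * (((fun p : (Fin n → 𝓞 K) × (Fin n → 𝓞 K) => (hR (fun i => ((Ideal.absNorm 𝔟₂ : ℕ) : 𝓞 K) * p.1 i + ((Ideal.absNorm 𝔟₁ : ℕ) : 𝓞 K) * p.2 i)).exists.choose) p i : K))) =
          (∑ i, ((Ideal.absNorm 𝔟₂ : ℕ) : K) * m i * ((p.1 i : K))) + ((∑ i, ((Ideal.absNorm 𝔟₁ : ℕ) : K) * m i * ((p.2 i : K))) +
            (∑ i, m i * (((fun p : (Fin n → 𝓞 K) × (Fin n → 𝓞 K) => (hR (fun i => ((Ideal.absNorm 𝔟₂ : ℕ) : 𝓞 K) * p.1 i + ((Ideal.absNorm 𝔟₁ : ℕ) : 𝓞 K) * p.2 i)).exists.choose) p i - (((Ideal.absNorm 𝔟₂ : ℕ) : 𝓞 K) * p.1 i + ((Ideal.absNorm 𝔟₁ : ℕ) : 𝓞 K) * p.2 i) : 𝓞 K) : K))) := by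
        rw [← Finset.sum_add_distrib, ← Finset.sum_add_distrib]
        refine Finset.sum_congr rfl fun i _ => ?_
        push_cast
        ring
      rw [hsum, psiK_add, psiK_add]
      have htr : psiK K
          (∑ i, m i * (((fun p : (Fin n → 𝓞 K) × (Fin n → 𝓞 K) => (hR (fun i => ((Ideal.absNorm 𝔟₂ : ℕ) : 𝓞 K) * p.1 i + ((Ideal.absNorm 𝔟₁ : ℕ) : 𝓞 K) * p.2 i)).exists.choose) p i - (((Ideal.absNorm 𝔟₂ : ℕ) : 𝓞 K) * p.1 i + ((Ideal.absNorm 𝔟₁ : ℕ) : 𝓞 K) * p.2 i) : 𝓞 K) : K)) = 1 := by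
        refine psiK_int ?_
        choose k hk using fun i => hm i _ (hhmem i)
        refine ⟨∑ i, k i, ?_⟩
        rw [map_sum]
        push_cast
        exact Finset.sum_congr rfl fun i _ => hk i
      rw [htr, mul_one]
    show (σ₁ (gqf c p.1 - b₂inv ^ 2 * N) * psiK K (∑ i, ((Ideal.absNorm 𝔟₂ : ℕ) : K) * m i * ((p.1 i : K)))) *
        (σ₂ (gqf c p.2 - b₁inv ^ 2 * N) * psiK K (∑ i, ((Ideal.absNorm 𝔟₁ : ℕ) : K) * m i * ((p.2 i : K)))) =
        (σ₁ (b₂inv ^ 2 * (gqf c ((fun p : (Fin n → 𝓞 K) × (Fin n → 𝓞 K) => (hR (fun i => ((Ideal.absNorm 𝔟₂ : ℕ) : 𝓞 K) * p.1 i + ((Ideal.absNorm 𝔟₁ : ℕ) : 𝓞 K) * p.2 i)).exists.choose) p) - N)) *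
          σ₂ (b₁inv ^ 2 * (gqf c ((fun p : (Fin n → 𝓞 K) × (Fin n → 𝓞 K) => (hR (fun i => ((Ideal.absNorm 𝔟₂ : ℕ) : 𝓞 K) * p.1 i + ((Ideal.absNorm 𝔟₁ : ℕ) : 𝓞 K) * p.2 i)).exists.choose) p) - N))) *
          psiK K (∑ i, m i * (((fun p : (Fin n → 𝓞 K) × (Fin n → 𝓞 K) => (hR (fun i => ((Ideal.absNorm 𝔟₂ : ℕ) : 𝓞 K) * p.1 i + ((Ideal.absNorm 𝔟₁ : ℕ) : 𝓞 K) * p.2 i)).exists.choose) p i : K)))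
    rw [hcong1, hcong2, hψ]
    ring
  simp only [expSum]
  rw [finsum_mem_prod_mul]
  exact (finsum_mem_eq_of_bijOn (fun p : (𝓞 K → ℂ) × (𝓞 K → ℂ) => fun x => p.1 (b₂inv ^ 2 * x) * p.2 (b₁inv ^ 2 * x)) hbij hmain).symm
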